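/- Let H = G_1 ⊗ G_2 be the join of graphs G_1 and G_2 with n_1 and n_2 vertices respectively, where neither G_1 nor G_2 is complete. Then the monophonic number of H satisfies m(H) = min{4, m(G_1), m(G_2)}. -/

import Mathlib

open SimpleGraph

/-- A chordless (induced) path: a path such that the only edges of `G` between
its vertices are the edges of the path. -/
def IsChordlessPath {V : Type*} (G : SimpleGraph V) {x y : V} (p : G.Walk x y) : Prop :=
  p.IsPath ∧ ∀ u v : V, u ∈ p.support → v ∈ p.support → G.Adj u v → s(u, v) ∈ p.edges

/-- `S` is monophonic in `G`: every vertex lies on a chordless (induced) path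
between two vertices of `S`. -/
def IsMonophonic {V : Type*} (G : SimpleGraph V) (S : Set V) : Prop :=
  ∀ z : V, ∃ x ∈ S, ∃ y ∈ S, ∃ p : G.Walk x y,
    IsChordlessPath G p ∧ z ∈ p.support

/-- The monophonic number of `G`: minimum cardinality of a monophonic set. -/
noncomputable def monophonicNumber {V : Type*} (G : SimpleGraph V) : ℕ :=
  sInf {n | ∃ S : Set V, IsMonophonic G S ∧ S.ncard = n}

/-- The join `G₁ ⊗ G₂` of two graphs: their disjoint union together with all
edges between the two vertex sets. -/
def joinGraph {V₁ V₂ : Type*} (G₁ : SimpleGraph V₁) (G₂ : SimpleGraph V₂) :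
    SimpleGraph (V₁ ⊕ V₂) where
  Adj x y :=
    match x, y with
    | Sum.inl a, Sum.inl b => G₁.Adj a b
    | Sum.inr a, Sum.inr b => G₂.Adj a b
    | Sum.inl _, Sum.inr _ => True
    | Sum.inr _, Sum.inl _ => True
  symm := by
    constructor
    rintro (a | a) (b | b) h <;> simp_all only <;> exact h.symm
  loopless := by
    constructor
    rintro (a | a) h
    · exact G₁.irrefl h
    · exact G₂.irrefl h

-- basic lemmas
lemma nil_chordless {V : Type*} (G : SimpleGraph V) (z : V) :
    IsChordlessPath G (Walk.nil : G.Walk z z) := by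
  refine ⟨Walk.IsPath.nil, ?_⟩
  intro u v hu hv hadj
  simp only [Walk.support_nil, List.mem_singleton] at hu hv
  subst hu; subst hv
  exact absurd rfl hadj.ne

lemma univ_mono {V : Type*} (G : SimpleGraph V) : IsMonophonic G Set.univ := by
  intro z
  exact ⟨z, trivial, z, trivial, Walk.nil, nil_chordless G z, by simp⟩

lemma mono_ncard_le {V : Type*} {G : SimpleGraph V} {S : Set V}
    (h : IsMonophonic G S) : monophonicNumber G ≤ S.ncard :=
  Nat.sInf_le ⟨S, h, rfl⟩

lemma mono_exists {V : Type*} [Fintype V] (G : SimpleGraph V) :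
    ∃ S : Set V, IsMonophonic G S ∧ S.ncard = monophonicNumber G := by
  have hne : {n | ∃ S : Set V, IsMonophonic G S ∧ S.ncard = n}.Nonempty :=
    ⟨(Set.univ : Set V).ncard, Set.univ, univ_mono G, rfl⟩
  exact Nat.sInf_mem hne

lemma path_edge_head {V : Type*} {G : SimpleGraph V} {x y w : V} {p : G.Walk x y}
    (hp : p.IsPath) (he : s(x, w) ∈ p.edges) :
    ∃ (h : G.Adj x w) (q : G.Walk w y), p = Walk.cons h q := by
  cases p with
  | nil => simp at he
  | @cons _ x' _ h q =>
    rw [Walk.edges_cons, List.mem_cons] at he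
    rcases he with he | he
    · rw [Sym2.eq_iff] at he
      rcases he with ⟨-, rfl⟩ | ⟨rfl, rfl⟩
      · exact ⟨h, q, rfl⟩
      · exact absurd rfl h.ne
    · exact absurd (q.fst_mem_support_of_mem_edges he)
        ((Walk.cons_isPath_iff h q).mp hp).2

lemma adj_support_ends {V : Type*} {G : SimpleGraph V} {x y : V} {p : G.Walk x y}
    (hp : IsChordlessPath G p) (hadj : G.Adj x y) : p.support = [x, y] := by
  have he : s(x, y) ∈ p.edges :=
    hp.2 x y p.start_mem_support p.end_mem_support hadj
  obtain ⟨h, q, rfl⟩ := path_edge_head hp.1 he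
  have hq : q = Walk.nil := Walk.isPath_iff_eq_nil.mp
    ((Walk.cons_isPath_iff h q).mp hp.1).1
  subst hq; simp

lemma chordless_map {V W : Type*} {G : SimpleGraph V} {G' : SimpleGraph W}
    (f : G →g G') (hinj : Function.Injective f)
    (hrefl : ∀ u v : V, G'.Adj (f u) (f v) → G.Adj u v)
    {x y : V} {p : G.Walk x y} (hp : IsChordlessPath G p) :
    IsChordlessPath G' (p.map f) := by
  refine ⟨Walk.map_isPath_of_injective hinj hp.1, ?_⟩
  intro u v hu hv hadj
  rw [Walk.support_map, List.mem_map] at hu hv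
  obtain ⟨u', hu', rfl⟩ := hu
  obtain ⟨v', hv', rfl⟩ := hv
  have he := hp.2 u' v' hu' hv' (hrefl _ _ hadj)
  rw [Walk.edges_map, List.mem_map]
  exact ⟨s(u', v'), he, Sym2.map_pair_eq f u' v'⟩

lemma isMonophonic_iso {V W : Type*} {G : SimpleGraph V} {G' : SimpleGraph W}
    (e : G ≃g G') {S : Set V} (hS : IsMonophonic G S) :
    IsMonophonic G' (e '' S) := by
  intro z
  obtain ⟨x, hx, y, hy, p, hp, hz⟩ := hS (e.symm z)
  refine ⟨e x, ⟨x, hx, rfl⟩, e y, ⟨y, hy, rfl⟩, p.map e.toHom, ?_, ?_⟩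
  · exact chordless_map e.toHom e.injective (fun u v h => e.map_adj_iff.mp h) hp
  · rw [Walk.support_map, List.mem_map]
    exact ⟨e.symm z, hz, e.apply_symm_apply z⟩

lemma monophonicNumber_iso_le {V W : Type*} [Fintype V]
    {G : SimpleGraph V} {G' : SimpleGraph W} (e : G ≃g G') :
    monophonicNumber G' ≤ monophonicNumber G := by
  obtain ⟨S, hS, hcard⟩ := mono_exists G
  rw [← hcard, ← Set.ncard_image_of_injective S e.injective]
  exact mono_ncard_le (isMonophonic_iso e hS)

lemma monophonicNumber_iso {V W : Type*} [Fintype V] [Fintype W]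
    {G : SimpleGraph V} {G' : SimpleGraph W} (e : G ≃g G') :
    monophonicNumber G = monophonicNumber G' :=
  le_antisymm (monophonicNumber_iso_le e.symm) (monophonicNumber_iso_le e)

def joinComm {V₁ V₂ : Type*} (G₁ : SimpleGraph V₁) (G₂ : SimpleGraph V₂) :
    joinGraph G₁ G₂ ≃g joinGraph G₂ G₁ where
  toEquiv := Equiv.sumComm V₁ V₂
  map_rel_iff' := by
    rintro (a | a) (b | b) <;> exact Iff.rfl

lemma pull_walk {V₁ V₂ : Type*} {G₁ : SimpleGraph V₁} {G₂ : SimpleGraph V₂} :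
    ∀ {u v : V₁ ⊕ V₂} (p : (joinGraph G₁ G₂).Walk u v) (a c : V₁),
      u = Sum.inl a → v = Sum.inl c →
      (∀ w ∈ p.support, ∃ t, w = Sum.inl t) →
      ∃ q : G₁.Walk a c, q.support.map Sum.inl = p.support ∧
        q.edges.map (Sym2.map Sum.inl) = p.edges := by
  intro u v p
  induction p with
  | nil =>
    rintro a c rfl hc _
    cases Sum.inl.inj hc
    exact ⟨Walk.nil, rfl, rfl⟩
  | @cons u w v h p ih =>
    rintro a c rfl hc hsup
    obtain ⟨t, rfl⟩ := hsup w (by simp)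
    have hG : G₁.Adj a t := h
    obtain ⟨q, hq1, hq2⟩ := ih t c rfl hc (fun w hw => hsup w (by simp [hw]))
    refine ⟨Walk.cons hG q, by simp [hq1], by simp [hq2]⟩

lemma mixed_support {V₁ V₂ : Type*} {G₁ : SimpleGraph V₁} {G₂ : SimpleGraph V₂}
    {a₁ a₂ : V₁} {b : V₂} {p : (joinGraph G₁ G₂).Walk (Sum.inl a₁) (Sum.inl a₂)}
    (hp : IsChordlessPath (joinGraph G₁ G₂) p) (hb : Sum.inr b ∈ p.support) :
    p.support = [Sum.inl a₁, Sum.inr b, Sum.inl a₂] := by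
  have he : s(Sum.inl a₁, Sum.inr b) ∈ p.edges :=
    hp.2 _ _ p.start_mem_support hb trivial
  obtain ⟨h, q, rfl⟩ := path_edge_head hp.1 he
  have hpath := (Walk.cons_isPath_iff h q).mp hp.1
  have hq : IsChordlessPath (joinGraph G₁ G₂) q := by
    refine ⟨hpath.1, ?_⟩
    intro u v hu hv hadj
    have hmem := hp.2 u v (by simp [hu]) (by simp [hv]) hadj
    rw [Walk.edges_cons, List.mem_cons] at hmem
    rcases hmem with h' | h'
    · exfalso
      rw [Sym2.eq_iff] at h'
      rcases h' with ⟨rfl, rfl⟩ | ⟨rfl, rfl⟩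
      · exact hpath.2 hu
      · exact hpath.2 hv
    · exact h'
  have hq2 : q.support = [Sum.inr b, Sum.inl a₂] := adj_support_ends hq trivial
  simp [hq2]

lemma mono_inl {V₁ V₂ : Type*} {G₁ : SimpleGraph V₁} {G₂ : SimpleGraph V₂}
    {S : Set (V₁ ⊕ V₂)} (hS : IsMonophonic (joinGraph G₁ G₂) S)
    (h2 : ∀ b b' : V₂, Sum.inr b ∈ S → Sum.inr b' ∈ S → b = b') :
    IsMonophonic G₁ (Sum.inl ⁻¹' S) := by
  have triv : ∀ x : V₁, Sum.inl x ∈ S →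
      ∃ u ∈ Sum.inl ⁻¹' S, ∃ v ∈ Sum.inl ⁻¹' S, ∃ p : G₁.Walk u v,
        IsChordlessPath G₁ p ∧ x ∈ p.support := by
    intro x hx
    exact ⟨x, hx, x, hx, Walk.nil, nil_chordless G₁ x, by simp⟩
  intro x
  classical
  obtain ⟨u, hu, v, hv, p, hp, hx⟩ := hS (Sum.inl x)
  cases u with
  | inl a =>
    cases v with
    | inl c =>
      rcases Classical.em (∃ b, Sum.inr b ∈ p.support) with hmix | hmix
      · obtain ⟨b, hb⟩ := hmix
        rw [mixed_support hp hb] at hx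
        simp only [List.mem_cons, List.mem_singleton, List.not_mem_nil, or_false] at hx
        rcases hx with h' | h' | h'
        · cases Sum.inl.inj h'; exact triv _ hu
        · exact absurd h' (by simp)
        · cases Sum.inl.inj h'; exact triv _ hv
      · push_neg at hmix
        have hsup : ∀ w ∈ p.support, ∃ t, w = Sum.inl t := by
          rintro (t | b) hw
          · exact ⟨t, rfl⟩
          · exact absurd hw (hmix b)
        obtain ⟨q, hq1, hq2⟩ := pull_walk p a c rfl rfl hsup
        refine ⟨a, hu, c, hv, q, ⟨?_, ?_⟩, ?_⟩
        · rw [Walk.isPath_def]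
          have := hp.1.support_nodup
          rw [← hq1] at this
          exact this.of_map
        · intro u' v' hu' hv' hadj
          have hadj' : (joinGraph G₁ G₂).Adj (Sum.inl u') (Sum.inl v') := hadj
          have hmem := hp.2 _ _ (by rw [← hq1]; exact List.mem_map_of_mem hu')
            (by rw [← hq1]; exact List.mem_map_of_mem hv') hadj'
          rw [← hq2, List.mem_map] at hmem
          obtain ⟨e, he, heq⟩ := hmem
          have : e = s(u', v') := by
            apply Sym2.map.injective Sum.inl_injective
            rw [heq, Sym2.map_pair_eq]
          rwa [this] at he
        · rw [← hq1, List.mem_map] at hx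
          obtain ⟨t, ht, hteq⟩ := hx
          cases Sum.inl.inj hteq
          exact ht
    | inr b =>
      rw [adj_support_ends hp trivial] at hx
      simp only [List.mem_cons, List.mem_singleton, List.not_mem_nil, or_false] at hx
      rcases hx with h' | h'
      · cases Sum.inl.inj h'; exact triv _ hu
      · exact absurd h' (by simp)
  | inr b =>
    cases v with
    | inl c =>
      rw [adj_support_ends hp trivial] at hx
      simp only [List.mem_cons, List.mem_singleton, List.not_mem_nil, or_false] at hx
      rcases hx with h' | h'
      · exact absurd h' (by simp)
      · cases Sum.inl.inj h'; exact triv _ hv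
    | inr b' =>
      cases h2 b b' hu hv
      rw [Walk.isPath_iff_eq_nil.mp hp.1] at hx
      simp at hx

lemma mono_inr {V₁ V₂ : Type*} {G₁ : SimpleGraph V₁} {G₂ : SimpleGraph V₂}
    {S : Set (V₁ ⊕ V₂)} (hS : IsMonophonic (joinGraph G₁ G₂) S)
    (h1 : ∀ a a' : V₁, Sum.inl a ∈ S → Sum.inl a' ∈ S → a = a') :
    IsMonophonic G₂ (Sum.inr ⁻¹' S) := by
  have hS' : IsMonophonic (joinGraph G₂ G₁) ((joinComm G₁ G₂) '' S) :=
    isMonophonic_iso (joinComm G₁ G₂) hS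
  have h2' : ∀ b b' : V₁, Sum.inr b ∈ (joinComm G₁ G₂) '' S →
      Sum.inr b' ∈ (joinComm G₁ G₂) '' S → b = b' := by
    rintro b b' ⟨s, hs, hseq⟩ ⟨s', hs', hseq'⟩
    cases s with
    | inl a => cases s' with
      | inl a' =>
        cases hseq; cases hseq'
        exact h1 _ _ hs hs'
      | inr c' => exact absurd hseq' (by simp [joinComm, Equiv.sumComm])
    | inr c => exact absurd hseq (by simp [joinComm, Equiv.sumComm])
  have key := mono_inl hS' h2'
  have hset : Sum.inl ⁻¹' ((joinComm G₁ G₂) '' S) = Sum.inr ⁻¹' S := by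
    ext b
    constructor
    · rintro ⟨s, hs, hseq⟩
      cases s with
      | inl a => exact absurd hseq (by simp [joinComm, Equiv.sumComm])
      | inr c =>
        have : c = b := by
          have := hseq
          simp only [joinComm, Equiv.sumComm, RelIso.coe_fn_mk, Equiv.coe_fn_mk,
            Sum.swap_inr] at this
          exact Sum.inl.inj this
        subst this; exact hs
    · intro hb
      exact ⟨Sum.inr b, hb, rfl⟩
  rwa [hset] at key

lemma crossPath {V₁ V₂ : Type*} (G₁ : SimpleGraph V₁) {G₂ : SimpleGraph V₂}
    {c d : V₂} (hcd : ¬ G₂.Adj c d) (hne : c ≠ d) (x : V₁) :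
    ∃ p : (joinGraph G₁ G₂).Walk (Sum.inr c) (Sum.inr d),
      IsChordlessPath (joinGraph G₁ G₂) p ∧ Sum.inl x ∈ p.support := by
  refine ⟨Walk.cons (show (joinGraph G₁ G₂).Adj (Sum.inr c) (Sum.inl x) from trivial)
    (Walk.cons (show (joinGraph G₁ G₂).Adj (Sum.inl x) (Sum.inr d) from trivial)
      Walk.nil), ⟨?_, ?_⟩, by simp⟩
  · rw [Walk.isPath_def]
    simp [hne]
  · intro u v hu hv hadj
    simp only [Walk.support_cons, Walk.support_nil, List.mem_cons,
      List.mem_singleton, List.not_mem_nil, or_false] at hu hv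
    simp only [Walk.edges_cons, Walk.edges_nil, List.mem_cons, List.mem_singleton,
      List.not_mem_nil, or_false]
    rcases hu with rfl | rfl | rfl <;> rcases hv with rfl | rfl | rfl
    · exact absurd rfl hadj.ne
    · left; rfl
    · exact absurd hadj hcd
    · left; exact Sym2.eq_swap
    · exact absurd rfl hadj.ne
    · right; rfl
    · exact absurd hadj.symm hcd
    · right; exact Sym2.eq_swap
    · exact absurd rfl hadj.ne

lemma crossPath' {V₁ V₂ : Type*} {G₁ : SimpleGraph V₁} (G₂ : SimpleGraph V₂)
    {a b : V₁} (hab : ¬ G₁.Adj a b) (hne : a ≠ b) (y : V₂) :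
    ∃ p : (joinGraph G₁ G₂).Walk (Sum.inl a) (Sum.inl b),
      IsChordlessPath (joinGraph G₁ G₂) p ∧ Sum.inr y ∈ p.support := by
  refine ⟨Walk.cons (show (joinGraph G₁ G₂).Adj (Sum.inl a) (Sum.inr y) from trivial)
    (Walk.cons (show (joinGraph G₁ G₂).Adj (Sum.inr y) (Sum.inl b) from trivial)
      Walk.nil), ⟨?_, ?_⟩, by simp⟩
  · rw [Walk.isPath_def]
    simp [hne]
  · intro u v hu hv hadj
    simp only [Walk.support_cons, Walk.support_nil, List.mem_cons,
      List.mem_singleton, List.not_mem_nil, or_false] at hu hv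
    simp only [Walk.edges_cons, Walk.edges_nil, List.mem_cons, List.mem_singleton,
      List.not_mem_nil, or_false]
    rcases hu with rfl | rfl | rfl <;> rcases hv with rfl | rfl | rfl
    · exact absurd rfl hadj.ne
    · left; rfl
    · exact absurd hadj hab
    · left; exact Sym2.eq_swap
    · exact absurd rfl hadj.ne
    · right; rfl
    · exact absurd hadj.symm hab
    · right; exact Sym2.eq_swap
    · exact absurd rfl hadj.ne

lemma exists_nonadj_mem {V : Type*} {G : SimpleGraph V} {S : Set V}
    (hS : IsMonophonic G S) (h : ∃ a b : V, a ≠ b ∧ ¬ G.Adj a b) :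
    ∃ u ∈ S, ∃ v ∈ S, u ≠ v ∧ ¬ G.Adj u v := by
  obtain ⟨a, b, hab, hnadj⟩ := h
  have key : ∀ z : V, z ∈ S ∨ ∃ u ∈ S, ∃ v ∈ S, u ≠ v ∧ ¬ G.Adj u v := by
    intro z
    obtain ⟨x, hx, y, hy, p, hp, hz⟩ := hS z
    rcases Classical.em (x = y) with rfl | hxy
    · left
      rw [Walk.isPath_iff_eq_nil.mp hp.1] at hz
      simp only [Walk.support_nil, List.mem_singleton] at hz
      subst hz; exact hx
    · rcases Classical.em (G.Adj x y) with hadj | hadj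
      · left
        rw [adj_support_ends hp hadj] at hz
        simp only [List.mem_cons, List.mem_singleton, List.not_mem_nil, or_false] at hz
        rcases hz with rfl | rfl
        · exact hx
        · exact hy
      · exact Or.inr ⟨x, hx, y, hy, hxy, hadj⟩
  rcases key a with ha | hpair
  · rcases key b with hb | hpair
    · exact ⟨a, ha, b, hb, hab, hnadj⟩
    · exact hpair
  · exact hpair

def inlHom {V₁ V₂ : Type*} (G₁ : SimpleGraph V₁) (G₂ : SimpleGraph V₂) :
    G₁ →g joinGraph G₁ G₂ :=
  ⟨Sum.inl, fun {u v} h => h⟩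

lemma join_le_four {V₁ V₂ : Type*} [Fintype V₁] [Fintype V₂]
    (G₁ : SimpleGraph V₁) (G₂ : SimpleGraph V₂)
    (h₁ : ∃ a b : V₁, a ≠ b ∧ ¬ G₁.Adj a b)
    (h₂ : ∃ a b : V₂, a ≠ b ∧ ¬ G₂.Adj a b) :
    monophonicNumber (joinGraph G₁ G₂) ≤ 4 := by
  obtain ⟨a, b, hab, hnadj1⟩ := h₁
  obtain ⟨c, d, hcd, hnadj2⟩ := h₂
  set S : Set (V₁ ⊕ V₂) := {Sum.inl a, Sum.inl b, Sum.inr c, Sum.inr d} with hSdef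
  have hmono : IsMonophonic (joinGraph G₁ G₂) S := by
    rintro (x | y)
    · obtain ⟨p, hp, hx⟩ := crossPath G₁ hnadj2 hcd x
      exact ⟨Sum.inr c, by simp [hSdef], Sum.inr d, by simp [hSdef], p, hp, hx⟩
    · obtain ⟨p, hp, hy⟩ := crossPath' G₂ hnadj1 hab y
      exact ⟨Sum.inl a, by simp [hSdef], Sum.inl b, by simp [hSdef], p, hp, hy⟩
  have hcard : S.ncard = 4 := by
    rw [hSdef, Set.ncard_insert_of_notMem (by simp [hab]),
        Set.ncard_insert_of_notMem (by simp),
        Set.ncard_insert_of_notMem (by simp [hcd]), Set.ncard_singleton]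
  calc monophonicNumber (joinGraph G₁ G₂) ≤ S.ncard := mono_ncard_le hmono
    _ = 4 := hcard

lemma join_le_left {V₁ V₂ : Type*} [Fintype V₁] [Fintype V₂]
    (G₁ : SimpleGraph V₁) (G₂ : SimpleGraph V₂)
    (h₁ : ∃ a b : V₁, a ≠ b ∧ ¬ G₁.Adj a b) :
    monophonicNumber (joinGraph G₁ G₂) ≤ monophonicNumber G₁ := by
  obtain ⟨S1, hS1, hcard⟩ := mono_exists G₁
  obtain ⟨u, hu, v, hv, huv, hnadj⟩ := exists_nonadj_mem hS1 h₁
  have hmono : IsMonophonic (joinGraph G₁ G₂) (Sum.inl '' S1) := by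
    rintro (x | y)
    · obtain ⟨x1, hx1, y1, hy1, p, hp, hx⟩ := hS1 x
      refine ⟨Sum.inl x1, ⟨x1, hx1, rfl⟩, Sum.inl y1, ⟨y1, hy1, rfl⟩,
        p.map (inlHom G₁ G₂),
        chordless_map _ Sum.inl_injective (fun u v h => h) hp, ?_⟩
      have h := List.mem_map_of_mem (f := inlHom G₁ G₂) hx
      rw [← Walk.support_map] at h
      exact h
    · obtain ⟨p, hp, hy⟩ := crossPath' G₂ hnadj huv y
      exact ⟨Sum.inl u, ⟨u, hu, rfl⟩, Sum.inl v, ⟨v, hv, rfl⟩, p, hp, hy⟩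
  rw [← hcard, ← Set.ncard_image_of_injective S1 Sum.inl_injective]
  exact mono_ncard_le hmono

/-- For a join `H = G₁ ⊗ G₂` of two non-complete graphs,
`m(H) = min {4, m(G₁), m(G₂)}`. -/
theorem monophonicNumber_join {V₁ V₂ : Type*} [Fintype V₁] [Fintype V₂]
    (G₁ : SimpleGraph V₁) (G₂ : SimpleGraph V₂)
    (h₁ : ∃ a b : V₁, a ≠ b ∧ ¬ G₁.Adj a b)
    (h₂ : ∃ a b : V₂, a ≠ b ∧ ¬ G₂.Adj a b) :
    monophonicNumber (joinGraph G₁ G₂) =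
      min 4 (min (monophonicNumber G₁) (monophonicNumber G₂)) := by
  classical
  apply le_antisymm
  · refine le_min (join_le_four G₁ G₂ h₁ h₂) (le_min (join_le_left G₁ G₂ h₁) ?_)
    rw [monophonicNumber_iso (joinComm G₁ G₂)]
    exact join_le_left G₂ G₁ h₂
  · obtain ⟨S, hS, hcard⟩ := mono_exists (joinGraph G₁ G₂)
    rw [← hcard]
    have hpre1 : (Sum.inl ⁻¹' S).ncard ≤ S.ncard := by
      rw [← Set.ncard_image_of_injective _ Sum.inl_injective]
      exact Set.ncard_le_ncard (Set.image_preimage_subset _ _) S.toFinite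
    have hpre2 : (Sum.inr ⁻¹' S).ncard ≤ S.ncard := by
      rw [← Set.ncard_image_of_injective _ Sum.inr_injective]
      exact Set.ncard_le_ncard (Set.image_preimage_subset _ _) S.toFinite
    by_cases hB : ∀ b b' : V₂, Sum.inr b ∈ S → Sum.inr b' ∈ S → b = b'
    · calc min 4 (min (monophonicNumber G₁) (monophonicNumber G₂))
          ≤ monophonicNumber G₁ := le_trans (min_le_right _ _) (min_le_left _ _)
        _ ≤ (Sum.inl ⁻¹' S).ncard := mono_ncard_le (mono_inl hS hB)
        _ ≤ S.ncard := hpre1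
    · by_cases hA : ∀ a a' : V₁, Sum.inl a ∈ S → Sum.inl a' ∈ S → a = a'
      · calc min 4 (min (monophonicNumber G₁) (monophonicNumber G₂))
            ≤ monophonicNumber G₂ := le_trans (min_le_right _ _) (min_le_right _ _)
          _ ≤ (Sum.inr ⁻¹' S).ncard := mono_ncard_le (mono_inr hS hA)
          _ ≤ S.ncard := hpre2
      · push_neg at hA hB
        obtain ⟨a, a', ha, ha', haa⟩ := hA
        obtain ⟨b, b', hb, hb', hbb⟩ := hB
        have hsub : ({Sum.inl a, Sum.inl a', Sum.inr b, Sum.inr b'} : Set (V₁ ⊕ V₂)) ⊆ S := by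
          intro z hz
          simp only [Set.mem_insert_iff, Set.mem_singleton_iff] at hz
          rcases hz with rfl | rfl | rfl | rfl <;> assumption
        have h4 : ({Sum.inl a, Sum.inl a', Sum.inr b, Sum.inr b'} : Set (V₁ ⊕ V₂)).ncard = 4 := by
          rw [Set.ncard_insert_of_notMem (by simp [haa]),
              Set.ncard_insert_of_notMem (by simp),
              Set.ncard_insert_of_notMem (by simp [hbb]), Set.ncard_singleton]
        calc min 4 (min (monophonicNumber G₁) (monophonicNumber G₂))
            ≤ 4 := min_le_left _ _
          _ = ({Sum.inl a, Sum.inl a', Sum.inr b, Sum.inr b'} : Set (V₁ ⊕ V₂)).ncard := h4.symm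
          _ ≤ S.ncard := Set.ncard_le_ncard hsub S.toFinite
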